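/- Let h be exponentially distributed with rate η > 0 (channel power gain), and fix constants P, C, r, σ² > 0, a_c > a_t > 0 with a_c + a_t = 1, and threshold γ with 0 < γ < a_c/a_t. Then for any nonnegative random variable I independent of h, P( a_c·P·h·C·r^{−α}/(a_t·P·h·C·r^{−α} + I + σ²) > γ ) = exp(−Ξ₃·r^α)·E[exp(−(η·γ/((a_c − γ·a_t)·P·C))·r^α·I)], where Ξ₃ = η·γ·σ²/((a_c − γ·a_t)·P·C). -/
import Mathlib


open MeasureTheory Real Set ProbabilityTheory

theorem connected_user_coverage {Ω : Type*} [MeasurableSpace Ω] (μ : Measure Ω)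
    [IsProbabilityMeasure μ] (h I : Ω → ℝ) (hh : Measurable h) (hIm : Measurable I)
    (η P C r σ2 ac aT γ α : ℝ)
    (hη : 0 < η) (hP : 0 < P) (hC : 0 < C) (hr : 0 < r) (hσ : 0 < σ2)
    (hat : 0 < aT) (hacat : aT < ac) (hsum : ac + aT = 1)
    (hγ : 0 < γ) (hγ2 : γ < ac / aT)
    (hexp : ∀ t : ℝ, 0 ≤ t → μ {ω | t < h ω} = ENNReal.ofReal (Real.exp (-(η * t))))
    (hInn : ∀ ω, 0 ≤ I ω) (hindep : IndepFun h I μ) :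
    (μ {ω | ac * P * h ω * C * r ^ (-α) / (aT * P * h ω * C * r ^ (-α) + I ω + σ2) > γ}).toReal =
      Real.exp (-(η * γ * σ2 / ((ac - γ * aT) * P * C)) * r ^ α) *
        ∫ ω, Real.exp (-(η * γ / ((ac - γ * aT) * P * C)) * r ^ α * I ω) ∂μ := by
  have hrα : (0:ℝ) < r ^ α := Real.rpow_pos_of_pos hr α
  have hrneg : r ^ (-α) = (r ^ α)⁻¹ := Real.rpow_neg hr.le α
  have hrnegpos : (0:ℝ) < r ^ (-α) := Real.rpow_pos_of_pos hr _
  have hac : 0 < ac - γ * aT := by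
    have := (lt_div_iff₀ hat).mp hγ2; linarith
  set D : ℝ := (ac - γ * aT) * P * C with hDdef
  have hDpos : 0 < D := by positivity
  set c : ℝ := γ * r ^ α / D with hcdef
  have hcpos : 0 < c := by positivity
  -- h > 0 a.s.
  have hms0 : MeasurableSet {ω | (0:ℝ) < h ω} := measurableSet_lt measurable_const hh
  have h0 : μ {ω | (0:ℝ) < h ω} = 1 := by
    have := hexp 0 le_rfl
    simpa using this
  have hae : ∀ᵐ ω ∂μ, 0 < h ω := by
    have hcm := measure_compl hms0 (measure_ne_top μ _)
    rw [h0, measure_univ, tsub_self] at hcm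
    rw [ae_iff]
    simpa [Set.compl_setOf] using hcm
  -- pointwise equivalence on {0 < h}
  have hiff : ∀ ω, 0 < h ω →
      (γ < ac * P * h ω * C * r ^ (-α) / (aT * P * h ω * C * r ^ (-α) + I ω + σ2)
        ↔ c * (I ω + σ2) < h ω) := by
    intro ω hω
    have hden : 0 < aT * P * h ω * C * r ^ (-α) + I ω + σ2 := by
      have h1 : 0 < aT * P * h ω * C * r ^ (-α) := by positivity
      have := hInn ω
      linarith
    have hprod : r ^ (-α) * r ^ α = 1 := by
      rw [hrneg]
      field_simp
    have hprod2 : r ^ α * r ^ (-α) = 1 := by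
      rw [hrneg]
      field_simp
    rw [lt_div_iff₀ hden, hcdef, div_mul_eq_mul_div, div_lt_iff₀ hDpos]
    constructor
    · intro hlt
      have h2 := mul_lt_mul_of_pos_right hlt hrα
      have e : γ * (aT * P * h ω * C * r ^ (-α) + I ω + σ2) * r ^ α
          = γ * aT * P * h ω * C * (r ^ (-α) * r ^ α) + γ * (I ω + σ2) * r ^ α := by ring
      have e2 : ac * P * h ω * C * r ^ (-α) * r ^ α
          = ac * P * h ω * C * (r ^ (-α) * r ^ α) := by ring
      rw [e, e2, hprod] at h2
      rw [hDdef]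
      nlinarith [h2]
    · intro hlt
      have h2 := mul_lt_mul_of_pos_right hlt hrnegpos
      have e : γ * r ^ α * (I ω + σ2) * r ^ (-α)
          = γ * (I ω + σ2) * (r ^ α * r ^ (-α)) := by ring
      rw [e, hprod2] at h2
      rw [hDdef] at h2
      nlinarith [h2]
  have hsetEq : μ {ω | ac * P * h ω * C * r ^ (-α) / (aT * P * h ω * C * r ^ (-α) + I ω + σ2) > γ}
      = μ {ω | c * (I ω + σ2) < h ω} := by
    apply measure_congr
    filter_upwards [hae] with ω hω
    simp only [Set.mem_setOf_eq, gt_iff_lt, eq_iff_iff]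
    exact hiff ω hω
  rw [hsetEq]
  -- independence: joint law is product
  have hmapPair : μ.map (fun ω => (I ω, h ω)) = (μ.map I).prod (μ.map h) :=
    (indepFun_iff_map_prod_eq_prod_map_map hIm.aemeasurable hh.aemeasurable).mp hindep.symm
  have hS : MeasurableSet {p : ℝ × ℝ | c * (p.1 + σ2) < p.2} :=
    measurableSet_lt (((measurable_fst.add measurable_const).const_mul c)) measurable_snd
  have hkey : μ {ω | c * (I ω + σ2) < h ω}
      = ∫⁻ x, ENNReal.ofReal (Real.exp (-(η * (c * (x + σ2))))) ∂(μ.map I) := by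
    have h1 : μ {ω | c * (I ω + σ2) < h ω}
        = (μ.map (fun ω => (I ω, h ω))) {p : ℝ × ℝ | c * (p.1 + σ2) < p.2} := by
      rw [Measure.map_apply (hIm.prodMk hh) hS]
      rfl
    rw [h1, hmapPair, Measure.prod_apply hS]
    apply lintegral_congr_ae
    have haeI : ∀ᵐ x ∂(μ.map I), 0 ≤ x := by
      exact (ae_map_iff hIm.aemeasurable measurableSet_Ici).mpr
        (Filter.Eventually.of_forall hInn)
    filter_upwards [haeI] with x hx
    have hpre : (Prod.mk x ⁻¹' {p : ℝ × ℝ | c * (p.1 + σ2) < p.2}) = {y | c * (x + σ2) < y} := rfl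
    have ms : MeasurableSet {y : ℝ | c * (x + σ2) < y} := measurableSet_Ioi
    rw [hpre, Measure.map_apply hh ms]
    exact hexp _ (by positivity)
  have hm1 : Measurable fun x : ℝ => ENNReal.ofReal (Real.exp (-(η * (c * (x + σ2))))) :=
    ENNReal.measurable_ofReal.comp (Real.measurable_exp.comp
      ((((measurable_id.add_const σ2).const_mul c).const_mul η).neg))
  rw [hkey, lintegral_map hm1 hIm]
  -- split the exponential
  have hsplit : ∀ ω, Real.exp (-(η * (c * (I ω + σ2))))
      = Real.exp (-(η * γ * σ2 / D) * r ^ α) * Real.exp (-(η * γ / D) * r ^ α * I ω) := by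
    intro ω
    rw [← Real.exp_add]
    congr 1
    rw [hcdef]
    field_simp
    ring
  simp only [hsplit]
  simp only [ENNReal.ofReal_mul (Real.exp_nonneg _)]
  rw [lintegral_const_mul' _ _ ENNReal.ofReal_ne_top]
  have hint : Integrable (fun ω => Real.exp (-(η * γ / D) * r ^ α * I ω)) μ := by
    apply Integrable.mono' (integrable_const (1:ℝ))
    · exact (Real.measurable_exp.comp (hIm.const_mul _)).aestronglyMeasurable
    · filter_upwards with ω
      rw [Real.norm_eq_abs, abs_of_nonneg (Real.exp_nonneg _)]
      apply Real.exp_le_one_iff.mpr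
      have hnn : 0 ≤ η * γ / D * r ^ α * I ω :=
        mul_nonneg (mul_nonneg (div_nonneg (by positivity) hDpos.le) hrα.le) (hInn ω)
      linarith
  rw [← ofReal_integral_eq_lintegral_ofReal hint
    (Filter.Eventually.of_forall fun ω => Real.exp_nonneg _)]
  rw [ENNReal.toReal_mul, ENNReal.toReal_ofReal (Real.exp_nonneg _),
    ENNReal.toReal_ofReal (integral_nonneg fun ω => Real.exp_nonneg _)]
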